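/- arXiv:1702.02345 — 2 statements merged into one kernel-verified Lean document; each statement's English description precedes it below -/
import Mathlib

section
/- Let p : E → W be a covering map between topological spaces with E simply connected, let L ⊆ W be a path-connected subspace (with the subspace topology), and let x ∈ L be a basepoint. If the homomorphism i_♯ : π₁(L, x) → π₁(W, x) induced by the inclusion L ↪ W is injective, then every loop in the subspace p⁻¹(L) ⊆ E (a continuous map γ : [0,1] → p⁻¹(L) with γ(0) = γ(1)) is nullhomotopic within p⁻¹(L), i.e., homotopic rel its endpoints, through maps into p⁻¹(L), to a constant loop. -/
open Set


open Set

section Gluing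

variable {α β : Type*} [TopologicalSpace α] [TopologicalSpace β]

theorem myContinuousOn_union_of_isClosed {A B : Set α} [∀ z, Decidable (z ∈ A)]
    (hA : IsClosed A) (hB : IsClosed B)
    {f g : α → β} (hf : ContinuousOn f A) (hg : ContinuousOn g B) (hfg : EqOn f g (A ∩ B)) :
    ContinuousOn (fun z => if z ∈ A then f z else g z) (A ∪ B) := by
  set h : α → β := fun z => if z ∈ A then f z else g z with hh
  have hhA : EqOn h f A := fun z hz => if_pos hz
  have hhB : EqOn h g B := by
    intro z hz
    by_cases hzA : z ∈ A
    · simpa [h, hzA] using hfg ⟨hzA, hz⟩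
    · simp [h, hzA]
  intro z hz
  apply ContinuousWithinAt.union
  · by_cases hzA : z ∈ A
    · exact ((hf z hzA).congr hhA (hhA hzA))
    · exact continuousWithinAt_of_notMem_closure (by rwa [hA.closure_eq])
  · by_cases hzB : z ∈ B
    · exact ((hg z hzB).congr hhB (hhB hzB))
    · exact continuousWithinAt_of_notMem_closure (by rwa [hB.closure_eq])

end Gluing

section Lift

variable {E W : Type} [TopologicalSpace E] [TopologicalSpace W] {p : E → W}

theorem exists_local_lift (hp : IsCoveringMap p) {Z : Type*} [TopologicalSpace Z]
    {H : Z → W} (hH : Continuous H) {B : Set Z} (w : W) [Nonempty (p ⁻¹' {w})]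
    (hB : MapsTo H B (hp w).toTrivialization.baseSet)
    {z₀ : Z} (hz₀ : z₀ ∈ B) (e : E) (he : p e = H z₀) :
    ∃ h : Z → E, ContinuousOn h B ∧ EqOn (p ∘ h) H B ∧ h z₀ = e := by
  set T := (hp w).toTrivialization with hT
  refine ⟨fun z => T.toOpenPartialHomeomorph.symm (H z, (T e).2), ?_, ?_, ?_⟩
  · apply T.toOpenPartialHomeomorph.continuousOn_symm.comp
      ((hH.prodMk continuous_const).continuousOn)
    intro z hz
    rw [T.mem_target]
    exact hB hz
  · intro z hz
    exact T.proj_symm_apply (T.mem_target.2 (hB hz))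
  · have hbe : p e ∈ T.baseSet := he ▸ hB hz₀
    have hsrc : e ∈ T.source := T.mem_source.2 hbe
    show T.toOpenPartialHomeomorph.symm (H z₀, (T e).2) = e
    rw [← he, T.mk_proj_snd' hbe]
    exact T.toOpenPartialHomeomorph.left_inv hsrc

theorem exists_glue_lift (hp : IsCoveringMap p) {Z : Type*} [TopologicalSpace Z]
    {H : Z → W} (hH : Continuous H) {A B : Set Z} (hA : IsClosed A) (hB : IsClosed B)
    (hconn : IsPreconnected (A ∩ B)) {z : Z} (hzA : z ∈ A) (hzB : z ∈ B)
    {g : Z → E} (hg : ContinuousOn g A) (hgl : EqOn (p ∘ g) H A)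
    (w : W) [Nonempty (p ⁻¹' {w})] (hBw : MapsTo H B (hp w).toTrivialization.baseSet) :
    ∃ g' : Z → E, ContinuousOn g' (A ∪ B) ∧ EqOn (p ∘ g') H (A ∪ B) ∧ EqOn g' g A := by
  classical
  obtain ⟨h, hhc, hhl, hhz⟩ := exists_local_lift hp hH w hBw hzB (g z) (hgl hzA)
  have heq : EqOn g h (A ∩ B) :=
    hp.eqOn_of_comp_eqOn hconn (hg.mono inter_subset_left) (hhc.mono inter_subset_right)
      (fun t ht => (hgl ht.1).trans (hhl ht.2).symm) ⟨hzA, hzB⟩ hhz.symm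
  refine ⟨fun t => if t ∈ A then g t else h t,
    myContinuousOn_union_of_isClosed hA hB hg hhc heq, ?_, fun t ht => if_pos ht⟩
  intro t ht
  by_cases htA : t ∈ A
  · simpa [htA] using hgl htA
  · have htB : t ∈ B := ht.resolve_left htA
    simpa [htA] using hhl htB

end Lift


namespace CoveringGrid

noncomputable def gs (N k : ℕ) : ℝ := k / N

variable {N : ℕ}

lemma gs_zero : gs N 0 = 0 := by simp [gs]

lemma gs_N (hN : 0 < N) : gs N N = 1 := by
  rw [gs, div_self (by exact_mod_cast hN.ne')]

lemma gs_nonneg (k : ℕ) : 0 ≤ gs N k :=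
  div_nonneg (Nat.cast_nonneg k) (Nat.cast_nonneg N)

lemma gs_mono (hN : 0 < N) {a b : ℕ} (hab : a ≤ b) : gs N a ≤ gs N b := by
  have hNR : (0:ℝ) < N := by exact_mod_cast hN
  unfold gs
  gcongr

lemma gs_le_one (hN : 0 < N) {k : ℕ} (hk : k ≤ N) : gs N k ≤ 1 := by
  rw [← gs_N hN]; exact gs_mono hN hk

lemma gs_gap (hN : 0 < N) (k : ℕ) : gs N (k+1) - gs N k = 1 / N := by
  have hNR : (0:ℝ) < N := by exact_mod_cast hN
  unfold gs
  push_cast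
  field_simp
  ring

def gQ (N i j : ℕ) : Set (ℝ × ℝ) :=
  Icc (gs N i) (gs N (i+1)) ×ˢ Icc (gs N j) (gs N (j+1))

def gG (N m : ℕ) : Set (ℝ × ℝ) :=
  (if 1 ≤ m / N then Icc (0:ℝ) 1 ×ˢ Icc 0 (gs N (m / N)) else ∅) ∪
  (if 1 ≤ m % N then Icc (0:ℝ) (gs N (m % N)) ×ˢ Icc (gs N (m / N)) (gs N (m / N + 1)) else ∅)

def gC (N m : ℕ) : Set (ℝ × ℝ) := insert ((0:ℝ), (0:ℝ)) (gG N m)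

lemma gQ_closed (i j : ℕ) : IsClosed (gQ N i j) := isClosed_Icc.prod isClosed_Icc

lemma gG_closed (m : ℕ) : IsClosed (gG N m) := by
  unfold gG
  refine IsClosed.union ?_ ?_ <;> split_ifs <;>
    first
      | exact isClosed_Icc.prod isClosed_Icc
      | exact isClosed_empty

lemma gC_closed (m : ℕ) : IsClosed (gC N m) := by
  rw [gC, Set.insert_eq]
  exact isClosed_singleton.union (gG_closed m)

lemma gC_zero : gC N 0 = {((0:ℝ), (0:ℝ))} := by
  rw [gC, gG]
  simp


lemma div_mod_succ_lt (hN : 0 < N) (m : ℕ) (h : m % N + 1 < N) :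
    (m+1) / N = m / N ∧ (m+1) % N = m % N + 1 := by
  have hdm : N * (m / N) + m % N = m := Nat.div_add_mod m N
  rw [Nat.div_mod_unique hN]
  constructor
  · generalize N * (m / N) = P at hdm ⊢
    omega
  · omega

lemma div_mod_succ_eq (hN : 0 < N) (m : ℕ) (h : m % N + 1 = N) :
    (m+1) / N = m / N + 1 ∧ (m+1) % N = 0 := by
  have hdm : N * (m / N) + m % N = m := Nat.div_add_mod m N
  rw [Nat.div_mod_unique hN]
  refine ⟨?_, hN⟩
  rw [Nat.mul_succ]
  generalize N * (m / N) = P at hdm ⊢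
  omega

lemma gG_step (hN : 0 < N) (m : ℕ) (hm : m < N * N) :
    gG N (m+1) = gG N m ∪ gQ N (m % N) (m / N) := by
  have hiN : m % N < N := Nat.mod_lt m hN
  rcases Nat.lt_or_ge (m % N + 1) N with hiA | hiB
  · obtain ⟨hd, hm'⟩ := div_mod_succ_lt hN m hiA
    rw [gG, gG, hd, hm']
    rw [if_pos (Nat.le_add_left 1 (m % N))]
    rcases Nat.eq_zero_or_pos (m % N) with hi0 | hipos
    · rw [hi0, if_neg (show ¬(1:ℕ) ≤ 0 by norm_num), Set.union_empty, gQ, gs_zero]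
    · rw [if_pos (show (1:ℕ) ≤ m % N from hipos), Set.union_assoc]
      congr 1
      rw [gQ, ← Set.union_prod,
        Set.Icc_union_Icc_eq_Icc (gs_nonneg _) (gs_mono hN (Nat.le_succ _))]
  · have hiB' : m % N + 1 = N := by omega
    obtain ⟨hd, hm'⟩ := div_mod_succ_eq hN m hiB'
    rw [gG, gG, hd, hm']
    rw [if_pos (Nat.le_add_left 1 (m / N)), if_neg (show ¬(1:ℕ) ≤ 0 by norm_num),
      Set.union_empty]
    have hrow : (if 1 ≤ m % N then
          Icc (0:ℝ) (gs N (m % N)) ×ˢ Icc (gs N (m / N)) (gs N (m / N + 1)) else ∅)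
        ∪ gQ N (m % N) (m / N)
        = Icc (0:ℝ) 1 ×ˢ Icc (gs N (m / N)) (gs N (m / N + 1)) := by
      rcases Nat.eq_zero_or_pos (m % N) with hi0 | hipos
      · rw [hi0, if_neg (show ¬(1:ℕ) ≤ 0 by norm_num), Set.empty_union, gQ, gs_zero,
          show (0:ℕ) + 1 = N by omega, gs_N hN]
      · rw [if_pos (show (1:ℕ) ≤ m % N from hipos), gQ, ← Set.union_prod,
          Set.Icc_union_Icc_eq_Icc (gs_nonneg _) (gs_mono hN (Nat.le_succ _))]
        rw [show gs N (m % N).succ = 1 by rw [Nat.succ_eq_add_one, hiB', gs_N hN]]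
    rw [Set.union_assoc, hrow]
    rcases Nat.eq_zero_or_pos (m / N) with hj0 | hjpos
    · rw [hj0, if_neg (show ¬(1:ℕ) ≤ 0 by norm_num), Set.empty_union, gs_zero]
    · rw [if_pos (show (1:ℕ) ≤ m / N from hjpos), ← Set.prod_union,
        Set.Icc_union_Icc_eq_Icc (gs_nonneg _) (gs_mono hN (Nat.le_succ _))]

lemma gC_step (hN : 0 < N) (m : ℕ) (hm : m < N * N) :
    gC N (m+1) = gC N m ∪ gQ N (m % N) (m / N) := by
  rw [gC, gC, gG_step hN m hm, Set.insert_union]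

lemma corner_mem_gQ (hN : 0 < N) (m : ℕ) :
    ((gs N (m % N), gs N (m / N)) : ℝ × ℝ) ∈ gQ N (m % N) (m / N) :=
  ⟨⟨le_rfl, gs_mono hN (Nat.le_succ _)⟩, ⟨le_rfl, gs_mono hN (Nat.le_succ _)⟩⟩

lemma pt_mem_gG (hN : 0 < N) {m : ℕ} (hm : 1 ≤ m) : ((0:ℝ), (0:ℝ)) ∈ gG N m := by
  rw [gG]
  rcases Nat.eq_zero_or_pos (m / N) with hj0 | hjpos
  · have hi : 1 ≤ m % N := by
      have hdm : N * (m / N) + m % N = m := Nat.div_add_mod m N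
      rw [hj0, Nat.mul_zero, Nat.zero_add] at hdm
      rw [hdm]; exact hm
    right
    rw [if_pos hi, hj0]
    exact ⟨⟨le_rfl, gs_nonneg _⟩, ⟨gs_zero.le, gs_nonneg _⟩⟩
  · left
    rw [if_pos (show (1:ℕ) ≤ m / N from hjpos)]
    exact ⟨⟨le_rfl, zero_le_one⟩, ⟨le_rfl, gs_nonneg _⟩⟩

lemma corner_mem_gC (hN : 0 < N) (m : ℕ) :
    ((gs N (m % N), gs N (m / N)) : ℝ × ℝ) ∈ gC N m := by
  rcases Nat.eq_zero_or_pos m with rfl | hm1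
  · left
    simp [gs_zero]
  rw [gC]
  right
  rw [gG]
  rcases Nat.eq_zero_or_pos (m / N) with hj0 | hjpos
  · have hi : 1 ≤ m % N := by
      have hdm : N * (m / N) + m % N = m := Nat.div_add_mod m N
      rw [hj0, Nat.mul_zero, Nat.zero_add] at hdm
      rw [hdm]; exact hm1
    right
    rw [if_pos hi]
    exact ⟨⟨gs_nonneg _, le_rfl⟩, ⟨le_rfl, gs_mono hN (Nat.le_succ _)⟩⟩
  · left
    rw [if_pos (show (1:ℕ) ≤ m / N from hjpos)]
    exact ⟨⟨gs_nonneg _, gs_le_one hN (Nat.mod_lt m hN).le⟩, ⟨gs_nonneg _, le_rfl⟩⟩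

lemma gC_last (hN : 0 < N) : gC N (N * N) = Icc (0:ℝ) 1 ×ˢ Icc (0:ℝ) 1 := by
  have hdiv : N * N / N = N := Nat.mul_div_cancel_left N hN
  have hmod : N * N % N = 0 := Nat.mul_mod_right N N
  rw [gC, gG, hdiv, hmod, if_pos (show (1:ℕ) ≤ N from hN),
    if_neg (show ¬(1:ℕ) ≤ 0 by norm_num), Set.union_empty, gs_N hN]
  exact Set.insert_eq_self.2 ⟨⟨le_rfl, zero_le_one⟩, ⟨le_rfl, zero_le_one⟩⟩

lemma gC_inter_preconnected (hN : 0 < N) (m : ℕ) (hm : m < N * N) :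
    IsPreconnected (gC N m ∩ gQ N (m % N) (m / N)) := by
  have hiN : m % N < N := Nat.mod_lt m hN
  have hjN : m / N < N := (Nat.div_lt_iff_lt_mul hN).2 (by omega)
  rcases Nat.eq_zero_or_pos m with rfl | hm1
  · rw [gC_zero]
    have h00 : ((0:ℝ),(0:ℝ)) ∈ gQ N (0 % N) (0 / N) := by
      rw [Nat.zero_mod, Nat.zero_div, gQ, gs_zero (N := N)]
      exact ⟨⟨le_rfl, gs_nonneg _⟩, ⟨le_rfl, gs_nonneg _⟩⟩
    rw [Set.inter_eq_self_of_subset_left (Set.singleton_subset_iff.2 h00)]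
    exact isPreconnected_singleton
  · rw [gC, Set.insert_eq_self.2 (pt_mem_gG hN hm1), gG, gQ]
    rcases Nat.eq_zero_or_pos (m / N) with hj0 | hjpos
    · have hi : 1 ≤ m % N := by
        have hdm : N * (m / N) + m % N = m := Nat.div_add_mod m N
        rw [hj0, Nat.mul_zero, Nat.zero_add] at hdm
        rw [hdm]; exact hm1
      rw [if_neg (show ¬(1:ℕ) ≤ m / N by omega), if_pos hi, Set.empty_union,
        Set.prod_inter_prod,
        Set.Icc_inter_Icc_eq_singleton (gs_nonneg _) (gs_mono hN (Nat.le_succ _)),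
        Set.inter_self]
      exact ((convex_singleton _).prod (convex_Icc _ _)).isPreconnected
    · rcases Nat.eq_zero_or_pos (m % N) with hi0 | hipos
      · rw [if_pos (show (1:ℕ) ≤ m / N from hjpos),
          if_neg (show ¬(1:ℕ) ≤ m % N by omega), Set.union_empty, Set.prod_inter_prod,
          hi0, gs_zero,
          Set.Icc_inter_Icc_eq_singleton (gs_nonneg _) (gs_mono hN (Nat.le_succ _)),
          Set.inter_eq_right.2 (Set.Icc_subset_Icc le_rfl (gs_le_one hN hN))]
        exact ((convex_Icc _ _).prod (convex_singleton _)).isPreconnected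
      · rw [if_pos (show (1:ℕ) ≤ m / N from hjpos),
          if_pos (show (1:ℕ) ≤ m % N from hipos), Set.union_inter_distrib_right,
          Set.prod_inter_prod, Set.prod_inter_prod,
          Set.Icc_inter_Icc_eq_singleton (gs_nonneg _) (gs_mono hN (Nat.le_succ _)),
          Set.Icc_inter_Icc_eq_singleton (gs_nonneg _) (gs_mono hN (Nat.le_succ _)),
          Set.inter_self,
          Set.inter_eq_right.2 (Set.Icc_subset_Icc (gs_nonneg _) (gs_le_one hN hiN))]
        apply IsPreconnected.union ((gs N (m % N), gs N (m / N)) : ℝ × ℝ)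
        · exact ⟨⟨le_rfl, gs_mono hN (Nat.le_succ _)⟩, rfl⟩
        · exact ⟨rfl, ⟨le_rfl, gs_mono hN (Nat.le_succ _)⟩⟩
        · exact ((convex_Icc _ _).prod (convex_singleton _)).isPreconnected
        · exact ((convex_singleton _).prod (convex_Icc _ _)).isPreconnected

end CoveringGrid


section Square

open CoveringGrid

variable {E W : Type} [TopologicalSpace E] [TopologicalSpace W] {p : E → W}

theorem exists_square_lift (hp : IsCoveringMap p) {H : ℝ × ℝ → W} (hH : Continuous H)
    (e₀ : E) (he₀ : p e₀ = H (0, 0)) :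
    ∃ g : ℝ × ℝ → E, ContinuousOn g (Icc 0 1 ×ˢ Icc 0 1) ∧
      EqOn (p ∘ g) H (Icc 0 1 ×ˢ Icc 0 1) ∧ g (0, 0) = e₀ := by
  classical
  have hsq : IsCompact (Icc (0:ℝ) 1 ×ˢ Icc (0:ℝ) 1) := isCompact_Icc.prod isCompact_Icc
  obtain ⟨δ, hδ, hball⟩ := lebesgue_number_lemma_of_metric hsq
    (fun w => ((hp w).2.choose_spec.2.1).preimage hH)
    (fun z _ => Set.mem_iUnion.2 ⟨H z, (hp (H z)).2.choose_spec.1⟩)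
  obtain ⟨n', hn'⟩ := exists_nat_one_div_lt hδ
  set N := n' + 1 with hNdef
  have hN : 0 < N := n'.succ_pos
  have hNR : (0:ℝ) < N := by exact_mod_cast hN
  have h1N : (1:ℝ) / N < δ := by
    rw [hNdef]
    push_cast
    exact hn'
  -- each grid square is mapped into some evenly covered set
  have hQw : ∀ m : ℕ, m < N * N →
      ∃ w, Set.MapsTo H (gQ N (m % N) (m / N)) (hp w).2.choose := by
    intro m hm
    have hiN : m % N < N := Nat.mod_lt m hN
    have hjN : m / N < N := (Nat.div_lt_iff_lt_mul hN).2 (by omega)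
    have hc : ((gs N (m % N), gs N (m / N)) : ℝ × ℝ) ∈ Icc (0:ℝ) 1 ×ˢ Icc (0:ℝ) 1 :=
      ⟨⟨gs_nonneg _, gs_le_one hN hiN.le⟩, ⟨gs_nonneg _, gs_le_one hN hjN.le⟩⟩
    obtain ⟨w, hw⟩ := hball _ hc
    refine ⟨w, fun z hz => hw ?_⟩
    have hgap' : ∀ k : ℕ, gs N (k+1) - gs N k = 1 / N := gs_gap hN
    have h1 : dist z.1 (gs N (m % N)) ≤ 1 / N := by
      rw [Real.dist_eq, abs_of_nonneg (sub_nonneg.2 hz.1.1)]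
      have := hz.1.2
      have := hgap' (m % N)
      linarith
    have h2 : dist z.2 (gs N (m / N)) ≤ 1 / N := by
      rw [Real.dist_eq, abs_of_nonneg (sub_nonneg.2 hz.2.1)]
      have := hz.2.2
      have := hgap' (m / N)
      linarith
    have hd : dist z ((gs N (m % N), gs N (m / N)) : ℝ × ℝ) ≤ 1 / N := by
      rw [Prod.dist_eq]
      exact max_le h1 h2
    exact Metric.mem_ball.2 (lt_of_le_of_lt hd h1N)
  -- inductive construction of a lift on the grid prefixes
  have main : ∀ m, m ≤ N * N → ∃ g : ℝ × ℝ → E, ContinuousOn g (gC N m) ∧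
      EqOn (p ∘ g) H (gC N m) ∧ g (0, 0) = e₀ := by
    intro m
    induction m with
    | zero =>
      intro _
      refine ⟨fun _ => e₀, continuousOn_const, ?_, rfl⟩
      rw [gC_zero]
      intro z hz
      rw [Set.mem_singleton_iff] at hz
      subst hz
      exact he₀
    | succ m ih =>
      intro hm1
      obtain ⟨g, hgc, hgl, hg0⟩ := ih (by omega)
      have hm : m < N * N := by omega
      obtain ⟨w, hw⟩ := hQw m hm
      haveI : Nonempty (p ⁻¹' {w}) := by
        have h1 := hgl (corner_mem_gC hN m)
        have h2 := hw (corner_mem_gQ hN m)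
        simp only [Function.comp_apply] at h1
        exact ⟨((hp w).2.choose_spec.2.2.2.choose
          ⟨g ((gs N (m % N), gs N (m / N)) : ℝ × ℝ), show p _ ∈ _ from h1 ▸ h2⟩).2⟩
      obtain ⟨g', hg'c, hg'l, hg'e⟩ := exists_glue_lift hp hH (gC_closed m) (gQ_closed _ _)
        (gC_inter_preconnected hN m hm) (corner_mem_gC hN m) (corner_mem_gQ hN m)
        hgc hgl w hw
      rw [← gC_step hN m hm] at hg'c hg'l
      exact ⟨g', hg'c, hg'l, (hg'e (Set.mem_insert _ _)).trans hg0⟩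
  obtain ⟨g, hgc, hgl, hg0⟩ := main (N * N) le_rfl
  rw [gC_last hN] at hgc hgl
  exact ⟨g, hgc, hgl, hg0⟩

end Square

section HomotopyLift

open unitInterval

variable {E W : Type} [TopologicalSpace E] [TopologicalSpace W] {p : E → W}

theorem exists_IxI_lift (hp : IsCoveringMap p) (K : C(I × I, W)) (e₀ : E)
    (he₀ : p e₀ = K (0, 0)) :
    ∃ Kt : C(I × I, E), (∀ z, p (Kt z) = K z) ∧ Kt (0, 0) = e₀ := by
  have hproj : Continuous (fun z : ℝ × ℝ =>
      ((projIcc 0 1 zero_le_one z.1, projIcc 0 1 zero_le_one z.2) : I × I)) :=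
    (continuous_projIcc.comp continuous_fst).prodMk (continuous_projIcc.comp continuous_snd)
  have hH : Continuous (fun z : ℝ × ℝ =>
      K (projIcc 0 1 zero_le_one z.1, projIcc 0 1 zero_le_one z.2)) :=
    K.continuous.comp hproj
  have he₀' : p e₀ = K (projIcc 0 1 zero_le_one (0:ℝ), projIcc 0 1 zero_le_one (0:ℝ)) := by
    rw [he₀]
    congr 1 <;> simp [projIcc_left]
  obtain ⟨g, hgc, hgl, hg0⟩ := exists_square_lift hp hH e₀ he₀'
  have hmem : ∀ z : I × I, (((z.1 : ℝ), (z.2 : ℝ)) : ℝ × ℝ) ∈ Icc (0:ℝ) 1 ×ˢ Icc (0:ℝ) 1 :=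
    fun z => ⟨z.1.2, z.2.2⟩
  refine ⟨⟨fun z => g (z.1, z.2), hgc.comp_continuous (by continuity) hmem⟩, ?_, ?_⟩
  · intro z
    have h := hgl (hmem z)
    simpa [Function.comp, projIcc_val] using h
  · exact hg0

end HomotopyLift

section AutTransfer

open CategoryTheory

theorem mapAut_injective_of_iso {C D : Type*} [Category C] [Category D] (F : C ⥤ D)
    {X Y : C} (e : X ≅ Y)
    (h : Function.Injective (Functor.mapAut X F)) :
    Function.Injective (Functor.mapAut Y F) := by
  intro u v huv
  have hhom : F.map u.hom = F.map v.hom := congrArg Iso.hom huv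
  have h2 : Functor.mapAut X F (e.symm.conjAut u) = Functor.mapAut X F (e.symm.conjAut v) := by
    apply Iso.ext
    show F.map (e.symm.conjAut u).hom = F.map (e.symm.conjAut v).hom
    simp only [Iso.conjAut_apply, Iso.symm_symm_eq, Iso.trans_hom, Iso.symm_hom,
      Functor.map_comp, hhom]
    change F.map e.hom ≫ F.map (Iso.hom (u : Y ≅ Y) ≫ e.symm.hom) =
      F.map e.hom ≫ F.map (Iso.hom (v : Y ≅ Y) ≫ e.symm.hom)
    rw [Functor.map_comp, Functor.map_comp, hhom]
  exact (Iso.conjAut e.symm).injective (h h2)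

end AutTransfer

open CategoryTheory

attribute [local instance] Path.Homotopic.setoid

/-- The homomorphism `f_♯ : π₁(X, x) → π₁(Y, f x)` induced on fundamental groups
by a continuous map `f : X → Y`. -/
noncomputable def inducedPi1Map {X Y : Type} [TopologicalSpace X] [TopologicalSpace Y]
    (f : C(X, Y)) (x : X) :
    FundamentalGroup X x →* FundamentalGroup Y (f x) :=
  Functor.mapEnd (X := FundamentalGroupoid.mk x)
    ((FundamentalGroupoid.fundamentalGroupoidFunctor.map
      (show TopCat.of X ⟶ TopCat.of Y from TopCat.ofHom f)) :
      FundamentalGroupoid X ⥤ FundamentalGroupoid Y)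

/-- If `p : E → W` is a covering map with `E` simply connected, `L ⊆ W` is a path-connected
subspace with basepoint `x ∈ L`, and the inclusion-induced map `π₁(L, x) → π₁(W, x)` is
injective, then every loop in the subspace `p ⁻¹' L` is nullhomotopic (homotopic rel its
endpoints, through maps into `p ⁻¹' L`, to the constant loop). -/
theorem loops_nullhomotopic_of_pi1_injective
    {E W : Type} [TopologicalSpace E] [TopologicalSpace W]
    (p : E → W) (hp : IsCoveringMap p) [SimplyConnectedSpace E]
    (L : Set W) (hLpc : IsPathConnected L) (x : W) (hx : x ∈ L)
    (hinj : Function.Injective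
      (inducedPi1Map (ContinuousMap.mk (Subtype.val : L → W) continuous_subtype_val)
        (⟨x, hx⟩ : L))) :
    ∀ (y : (p ⁻¹' L)) (γ : Path y y), γ.Homotopic (Path.refl y) := by
  intro y γ
  have hpc : Continuous p := hp.continuous
  let pS : C((p ⁻¹' L : Set E), L) := ⟨fun z => ⟨p z.1, z.2⟩,
    (hpc.comp continuous_subtype_val).subtype_mk _⟩
  let ιL : C(L, W) := ⟨Subtype.val, continuous_subtype_val⟩
  let a : L := pS y
  let δ : Path a a := γ.map pS.continuous
  -- Step 1: the image of δ in W is nullhomotopic, since E is simply connected.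
  have hδW : (δ.map ιL.continuous).Homotopic (Path.refl ((a : W))) := by
    have hE : (γ.map (continuous_subtype_val :
          Continuous (Subtype.val : (p ⁻¹' L : Set E) → E))).Homotopic
        (Path.refl ((y : E))) := SimplyConnectedSpace.paths_homotopic _ _
    exact hE.map ⟨p, hpc⟩
  -- Step 2: δ is nullhomotopic in L, by injectivity of π₁(L) → π₁(W).
  let F : FundamentalGroupoid L ⥤ FundamentalGroupoid W :=
    ((FundamentalGroupoid.fundamentalGroupoidFunctor.map
      (show TopCat.of L ⟶ TopCat.of W from TopCat.ofHom <|
        ContinuousMap.mk (Subtype.val : L → W) continuous_subtype_val)) :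
      FundamentalGroupoid L ⥤ FundamentalGroupoid W)
  have hinj0 : Function.Injective
      (Functor.mapAut (X := FundamentalGroupoid.mk (⟨x, hx⟩ : L)) F) :=
    fun u v huv => Iso.ext (hinj (a₁ := u.hom) (a₂ := v.hom) (congrArg Iso.hom huv))
  obtain ⟨α⟩ : Nonempty (Path (⟨x, hx⟩ : L) a) :=
    ⟨((hLpc.joinedIn x hx (p ↑y) y.2).joined_subtype).somePath⟩
  have hinja : Function.Injective
      (Functor.mapAut (X := FundamentalGroupoid.mk a) F) :=
    mapAut_injective_of_iso F
      ((Groupoid.isoEquivHom _ _).symm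
        (show FundamentalGroupoid.mk (⟨x, hx⟩ : L) ⟶ FundamentalGroupoid.mk a from ⟦α⟧))
      hinj0
  let u : Aut (FundamentalGroupoid.mk a) :=
    (Groupoid.isoEquivHom _ _).symm
      (show FundamentalGroupoid.mk a ⟶ FundamentalGroupoid.mk a from ⟦δ⟧)
  have hu : Functor.mapAut (X := FundamentalGroupoid.mk a) F u = 1 := by
    apply Iso.ext
    show F.map (show FundamentalGroupoid.mk a ⟶ FundamentalGroupoid.mk a from ⟦δ⟧) = 𝟙 _
    show (⟦δ.map ιL.continuous⟧ : Path.Homotopic.Quotient ((a : W)) ((a : W))) = _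
    rw [FundamentalGroupoid.id_eq_path_refl]
    exact Quotient.sound hδW
  have hu1 : u = 1 := hinja (by rw [hu, map_one])
  have hδL : δ.Homotopic (Path.refl a) := by
    have h1 : (⟦δ⟧ : Path.Homotopic.Quotient a a) = ⟦Path.refl a⟧ := congrArg Iso.hom hu1
    exact Quotient.exact h1
  obtain ⟨Hδ⟩ := hδL
  -- Step 3: lift the nullhomotopy through the covering map.
  let K : C(unitInterval × unitInterval, W) :=
    ⟨fun z => ((Hδ z : L) : W), continuous_subtype_val.comp Hδ.continuous⟩
  have hK00 : p ↑y = K (0, 0) := by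
    show p ↑y = ((Hδ (0, 0) : L) : W)
    rw [show Hδ (0, 0) = δ 0 from Hδ.apply_zero 0]
    show p ↑y = p ↑(γ 0)
    rw [γ.source]
  obtain ⟨Kt, hKt, hKt0⟩ := exists_IxI_lift hp K (↑y) hK00
  haveI : PreconnectedSpace unitInterval := Subtype.preconnectedSpace isPreconnected_Icc
  have slice0 : ∀ t, Kt (0, t) = ↑(γ t) := by
    have hfe : p ∘ (fun t => Kt (0, t)) = p ∘ (fun t => (↑(γ t) : E)) := by
      funext t
      show p (Kt (0, t)) = p ↑(γ t)
      rw [hKt (0, t)]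
      show ((Hδ (0, t) : L) : W) = _
      rw [show Hδ (0, t) = δ t from Hδ.apply_zero t]
      rfl
    have := hp.eq_of_comp_eq (g₁ := fun t => Kt (0, t)) (g₂ := fun t => (↑(γ t) : E))
      (Kt.continuous.comp (continuous_const.prodMk continuous_id))
      (continuous_subtype_val.comp γ.continuous) hfe 0
      (by show Kt (0, 0) = ↑(γ 0); rw [hKt0]; exact congrArg Subtype.val γ.source.symm)
    exact fun t => congrFun this t
  have hbot : ∀ s, Kt (s, 0) = ↑y := by
    have hfe : p ∘ (fun s => Kt (s, 0)) = p ∘ (fun _ => (↑y : E)) := by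
      funext s
      show p (Kt (s, 0)) = p ↑y
      rw [hKt (s, 0)]
      show ((Hδ (s, 0) : L) : W) = _
      rw [Hδ.source s]
      rfl
    have := hp.eq_of_comp_eq (g₁ := fun s => Kt (s, 0)) (g₂ := fun _ => (↑y : E))
      (Kt.continuous.comp (continuous_id.prodMk continuous_const))
      continuous_const hfe 0 hKt0
    exact fun s => congrFun this s
  have htop : ∀ s, Kt (s, 1) = ↑y := by
    have hfe : p ∘ (fun s => Kt (s, 1)) = p ∘ (fun _ => (↑y : E)) := by
      funext s
      show p (Kt (s, 1)) = p ↑y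
      rw [hKt (s, 1)]
      show ((Hδ (s, 1) : L) : W) = _
      rw [Hδ.target s]
      rfl
    have := hp.eq_of_comp_eq (g₁ := fun s => Kt (s, 1)) (g₂ := fun _ => (↑y : E))
      (Kt.continuous.comp (continuous_id.prodMk continuous_const))
      continuous_const hfe 0
      (by show Kt (0, 1) = ↑y; rw [slice0 1]; exact congrArg Subtype.val γ.target)
    exact fun s => congrFun this s
  have hend : ∀ t, Kt (1, t) = ↑y := by
    have hfe : p ∘ (fun t => Kt (1, t)) = p ∘ (fun _ => (↑y : E)) := by
      funext t
      show p (Kt (1, t)) = p ↑y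
      rw [hKt (1, t)]
      show ((Hδ (1, t) : L) : W) = _
      rw [show Hδ (1, t) = Path.refl a t from Hδ.apply_one t]
      rfl
    have := hp.eq_of_comp_eq (g₁ := fun t => Kt (1, t)) (g₂ := fun _ => (↑y : E))
      (Kt.continuous.comp (continuous_const.prodMk continuous_id))
      continuous_const hfe 0 (hbot 1)
    exact fun t => congrFun this t
  have hmemS : ∀ z, Kt z ∈ p ⁻¹' L := by
    intro z
    show p (Kt z) ∈ L
    rw [hKt z]
    exact (Hδ z).2
  refine ⟨{ toFun := fun z => ⟨Kt z, hmemS z⟩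
            continuous_toFun := Kt.continuous.subtype_mk _
            map_zero_left := fun t => Subtype.ext (slice0 t)
            map_one_left := fun t => Subtype.ext (hend t)
            prop' := ?_ }⟩
  intro t z hz
  rcases hz with hz | hz
  · subst hz
    exact Subtype.ext ((hbot t).trans (congrArg Subtype.val γ.source.symm))
  · rw [Set.mem_singleton_iff] at hz
    subst hz
    exact Subtype.ext ((htop t).trans (congrArg Subtype.val γ.target.symm))
end

section
/- Let n ≥ 1 and let f : ℂ → (Fin n → ℂ) be a map that is continuous on the closed unit disc D̄ = {z ∈ ℂ : |z| ≤ 1} and complex differentiable on the open unit disc {z : |z| < 1}, and suppose that for every z with |z| = 1 and every k, the coordinate f(z) k is real (has imaginary part zero). Then f is constant on D̄. -/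
open Metric Set

private lemma aux_im_le (g : ℂ → ℂ) (hdg : DifferentiableOn ℂ g (ball (0:ℂ) 1))
    (hcg : ContinuousOn g (closedBall (0:ℂ) 1))
    (hb : ∀ z ∈ sphere (0:ℂ) 1, (g z).im = 0) (c : ℂ)
    (hre : ∀ w : ℂ, (c * w).re = w.im • (c * Complex.I).re) :
    ∀ z ∈ closedBall (0:ℂ) 1, ((c * Complex.I).re) * (g z).im ≤ 0 := by
  intro z hz
  have hfr : frontier (ball (0:ℂ) 1) = sphere (0:ℂ) 1 := frontier_ball 0 one_ne_zero
  have hcl : closure (ball (0:ℂ) 1) = closedBall (0:ℂ) 1 := closure_ball 0 one_ne_zero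
  have hdiff : DiffContOnCl ℂ (fun z => Complex.exp (c * g z)) (ball (0:ℂ) 1) := by
    constructor
    · exact ((differentiableOn_const c).mul hdg).cexp
    · rw [hcl]
      exact Complex.continuous_exp.comp_continuousOn ((continuousOn_const).mul hcg)
  have h1 : ‖Complex.exp (c * g z)‖ ≤ 1 := by
    refine Complex.norm_le_of_forall_mem_frontier_norm_le isBounded_ball hdiff ?_ (hcl ▸ hz)
    · intro w hw
      rw [hfr] at hw
      have : (g w).im = 0 := hb w hw
      rw [Complex.norm_exp, hre, this]
      simp
  rw [Complex.norm_exp, hre, Real.exp_le_one_iff, smul_eq_mul,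
    mul_comm] at h1
  exact h1

private lemma aux_im_eq_zero (g : ℂ → ℂ) (hdg : DifferentiableOn ℂ g (ball (0:ℂ) 1))
    (hcg : ContinuousOn g (closedBall (0:ℂ) 1))
    (hb : ∀ z ∈ sphere (0:ℂ) 1, (g z).im = 0) :
    ∀ z ∈ closedBall (0:ℂ) 1, (g z).im = 0 := by
  intro z hz
  have h1 := aux_im_le g hdg hcg hb (-Complex.I) (fun w => by simp [Complex.ext_iff]) z hz
  have h2 := aux_im_le g hdg hcg hb Complex.I (fun w => by simp [Complex.ext_iff]) z hz
  simp only [Complex.mul_re, Complex.I_re, Complex.I_im, Complex.neg_im, Complex.neg_re] at h1 h2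
  nlinarith

private lemma aux_const (g : ℂ → ℂ) (hdg : DifferentiableOn ℂ g (ball (0:ℂ) 1))
    (him : ∀ z ∈ ball (0:ℂ) 1, (g z).im = 0) :
    ∀ z ∈ ball (0:ℂ) 1, g z = g 0 := by
  have h0 : (0:ℂ) ∈ ball (0:ℂ) 1 := by simp
  have hg : AnalyticOnNhd ℂ g (ball (0:ℂ) 1) := hdg.analyticOnNhd isOpen_ball
  rcases hg.is_constant_or_isOpen (convex_ball 0 1).isPreconnected with ⟨w, hw⟩ | hopen
  · intro z hz; rw [hw z hz, hw 0 h0]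
  · exfalso
    have himg : IsOpen (g '' ball (0:ℂ) 1) := hopen _ Subset.rfl isOpen_ball
    obtain ⟨r, hr, hball⟩ := Metric.isOpen_iff.mp himg (g 0) ⟨0, h0, rfl⟩
    have hmem : g 0 + ((r / 2 : ℝ) : ℂ) * Complex.I ∈ g '' ball (0:ℂ) 1 := by
      apply hball
      have : dist (g 0 + (r / 2 : ℝ) * Complex.I) (g 0) = r / 2 := by
        rw [Complex.dist_eq]
        simp [abs_of_pos hr]
      rw [mem_ball, this]
      linarith
    obtain ⟨w, hw, hw2⟩ := hmem
    have : (g w).im = 0 := him w hw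
    rw [hw2] at this
    simp [him 0 h0] at this
    linarith

/-- A map `f : ℂ → ℂⁿ` that is continuous on the closed unit disc, holomorphic on the open
unit disc, and takes real values (coordinatewise) on the unit circle, is constant on the
closed unit disc. -/
theorem holomorphic_disc_real_boundary_constant
    (n : ℕ) (hn : 1 ≤ n) (f : ℂ → (Fin n → ℂ))
    (hc : ContinuousOn f {z : ℂ | ‖z‖ ≤ 1})
    (hd : DifferentiableOn ℂ f {z : ℂ | ‖z‖ < 1})
    (hb : ∀ z : ℂ, ‖z‖ = 1 → ∀ k : Fin n, (f z k).im = 0) :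
    ∀ z ∈ {z : ℂ | ‖z‖ ≤ 1}, ∀ w ∈ {z : ℂ | ‖z‖ ≤ 1}, f z = f w := by
  have hset1 : {z : ℂ | ‖z‖ ≤ 1} = closedBall (0:ℂ) 1 := by
    ext z; simp [Complex.dist_eq]
  have hset2 : {z : ℂ | ‖z‖ < 1} = ball (0:ℂ) 1 := by
    ext z; simp [Complex.dist_eq]
  rw [hset1] at hc ⊢
  rw [hset2] at hd
  suffices h : ∀ z ∈ closedBall (0:ℂ) 1, f z = f 0 by
    intro z hz w hw; rw [h z hz, h w hw]
  have hball : Set.EqOn f (fun _ => f 0) (ball (0:ℂ) 1) := by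
    intro z hz; funext k
    have hdg : DifferentiableOn ℂ (fun z => f z k) (ball (0:ℂ) 1) :=
      differentiableOn_pi.mp hd k
    have hcg : ContinuousOn (fun z => f z k) (closedBall (0:ℂ) 1) :=
      (continuous_apply k).comp_continuousOn hc
    have him := aux_im_eq_zero _ hdg hcg (fun w hw => by
      apply hb w _ k
      simpa [Complex.dist_eq] using hw)
    exact aux_const _ hdg (fun w hw => him w (ball_subset_closedBall hw)) z hz
  exact Set.EqOn.of_subset_closure hball hc continuousOn_const ball_subset_closedBall
    (by rw [closure_ball (0:ℂ) one_ne_zero])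
end
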